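/- (Uniqueness for a fully degenerate ground manifold.) Suppose P H P = 𝓔·P for some real number 𝓔 (all ground-state energies equal), and suppose there is a unit vector ψ₀ with P ψ₀ = ψ₀ and Q H ψ₀ = 0 such that every vector ψ satisfying P ψ = ψ and Q H ψ = 0 is a scalar multiple of ψ₀ (the kernel is one-dimensional). Then ψ₀ψ₀ᴴ is a dark state, and it is the unique one: every density matrix ρ with L(ρ) = 0 and ρ = PρP equals ψ₀ψ₀ᴴ. -/

import Mathlib

open Matrix Complex BigOperators ComplexOrder

/-- Projection onto the ground-state indices. -/
noncomputable def Pg (Ng Ne : ℕ) : Matrix (Fin Ng ⊕ Fin Ne) (Fin Ng ⊕ Fin Ne) ℂ :=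
  Matrix.diagonal (Sum.elim (fun _ => 1) (fun _ => 0))

/-- Projection onto the excited-state indices. -/
noncomputable def Qe (Ng Ne : ℕ) : Matrix (Fin Ng ⊕ Fin Ne) (Fin Ng ⊕ Fin Ne) ℂ :=
  1 - Pg Ng Ne

/-- Jump operator |g_i⟩⟨e_j|. -/
noncomputable def jump (Ng Ne : ℕ) (i : Fin Ng) (j : Fin Ne) :
    Matrix (Fin Ng ⊕ Fin Ne) (Fin Ng ⊕ Fin Ne) ℂ :=
  Matrix.single (Sum.inl i) (Sum.inr j) 1

/-- Decay operator Γ = Σ γ_{ij} σ_{ij}ᴴ σ_{ij}. -/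
noncomputable def Gam (Ng Ne : ℕ) (γ : Fin Ng → Fin Ne → ℝ) :
    Matrix (Fin Ng ⊕ Fin Ne) (Fin Ng ⊕ Fin Ne) ℂ :=
  ∑ i, ∑ j, (γ i j : ℂ) • ((jump Ng Ne i j)ᴴ * jump Ng Ne i j)

/-- The Lindblad generator. -/
noncomputable def Lindblad (Ng Ne : ℕ) (H : Matrix (Fin Ng ⊕ Fin Ne) (Fin Ng ⊕ Fin Ne) ℂ)
    (γ : Fin Ng → Fin Ne → ℝ) (ρ : Matrix (Fin Ng ⊕ Fin Ne) (Fin Ng ⊕ Fin Ne) ℂ) :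
    Matrix (Fin Ng ⊕ Fin Ne) (Fin Ng ⊕ Fin Ne) ℂ :=
  (-Complex.I) • (H * ρ - ρ * H) +
    ∑ i, ∑ j, (γ i j : ℂ) •
      (jump Ng Ne i j * ρ * (jump Ng Ne i j)ᴴ -
        (1 / 2 : ℂ) • ((jump Ng Ne i j)ᴴ * jump Ng Ne i j * ρ +
          ρ * ((jump Ng Ne i j)ᴴ * jump Ng Ne i j)))

/-- A dark state: a density matrix annihilated by the Lindbladian and supported on the
ground-state subspace. -/
def IsDarkState (Ng Ne : ℕ) (H : Matrix (Fin Ng ⊕ Fin Ne) (Fin Ng ⊕ Fin Ne) ℂ)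
    (γ : Fin Ng → Fin Ne → ℝ) (ρ : Matrix (Fin Ng ⊕ Fin Ne) (Fin Ng ⊕ Fin Ne) ℂ) : Prop :=
  ρ.PosSemidef ∧ ρ.trace = 1 ∧ Lindblad Ng Ne H γ ρ = 0 ∧ ρ = Pg Ng Ne * ρ * Pg Ng Ne

section Aux

variable (Ng Ne : ℕ)

lemma Pg_mul_Pg : Pg Ng Ne * Pg Ng Ne = Pg Ng Ne := by
  rw [Pg, diagonal_mul_diagonal]
  exact congrArg diagonal (by funext a; cases a <;> simp)

lemma Pg_conjTranspose : (Pg Ng Ne)ᴴ = Pg Ng Ne := by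
  rw [Pg, diagonal_conjTranspose]
  exact congrArg diagonal (by funext a; cases a <;> simp)

lemma jump_mul_Pg (i : Fin Ng) (j : Fin Ne) : jump Ng Ne i j * Pg Ng Ne = 0 := by
  ext a b
  simp only [jump, Pg, mul_diagonal, Matrix.zero_apply]
  cases b with
  | inl k => simp [Matrix.single]
  | inr k => simp

lemma Pg_mul_jumpT (i : Fin Ng) (j : Fin Ne) : Pg Ng Ne * (jump Ng Ne i j)ᴴ = 0 := by
  ext a b
  simp only [jump, Pg, diagonal_mul, Matrix.zero_apply, conjTranspose_apply]
  cases a with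
  | inl k => simp [Matrix.single]
  | inr k => simp

lemma mul_vecMulVec (M : Matrix (Fin Ng ⊕ Fin Ne) (Fin Ng ⊕ Fin Ne) ℂ)
    (u v : Fin Ng ⊕ Fin Ne → ℂ) : M * vecMulVec u v = vecMulVec (M *ᵥ u) v := by
  ext a b
  simp only [mul_apply, vecMulVec_apply, mulVec, dotProduct, Finset.sum_mul]
  exact Finset.sum_congr rfl fun c _ => by ring

lemma vecMulVec_mul (M : Matrix (Fin Ng ⊕ Fin Ne) (Fin Ng ⊕ Fin Ne) ℂ)
    (u v : Fin Ng ⊕ Fin Ne → ℂ) : vecMulVec u v * M = vecMulVec u (v ᵥ* M) := by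
  ext a b
  simp only [mul_apply, vecMulVec_apply, vecMul, dotProduct, Finset.mul_sum]
  exact Finset.sum_congr rfl fun c _ => by ring

lemma vecMulVec_smul_left (c : ℂ) (u v : Fin Ng ⊕ Fin Ne → ℂ) :
    vecMulVec (c • u) v = c • vecMulVec u v := by
  ext a b
  simp [vecMulVec_apply, mul_assoc]

lemma vecMulVec_smul_right (c : ℂ) (u v : Fin Ng ⊕ Fin Ne → ℂ) :
    vecMulVec u (c • v) = c • vecMulVec u v := by
  ext a b
  simp only [vecMulVec_apply, Pi.smul_apply, smul_eq_mul, Matrix.smul_apply]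
  ring

lemma lindblad_of_supported (H : Matrix (Fin Ng ⊕ Fin Ne) (Fin Ng ⊕ Fin Ne) ℂ)
    (γ : Fin Ng → Fin Ne → ℝ) (ρ : Matrix (Fin Ng ⊕ Fin Ne) (Fin Ng ⊕ Fin Ne) ℂ)
    (hρ : ρ = Pg Ng Ne * ρ * Pg Ng Ne) :
    Lindblad Ng Ne H γ ρ = (-Complex.I) • (H * ρ - ρ * H) := by
  have h1 : ∀ (i : Fin Ng) (j : Fin Ne), jump Ng Ne i j * ρ = 0 := by
    intro i j
    conv_lhs => rw [hρ]
    simp only [← mul_assoc]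
    rw [jump_mul_Pg]
    simp
  have h2 : ∀ (i : Fin Ng) (j : Fin Ne), ρ * (jump Ng Ne i j)ᴴ = 0 := by
    intro i j
    conv_lhs => rw [hρ]
    rw [mul_assoc, Pg_mul_jumpT]
    simp
  have key : ∀ (i : Fin Ng) (j : Fin Ne),
      jump Ng Ne i j * ρ * (jump Ng Ne i j)ᴴ -
        (1 / 2 : ℂ) • ((jump Ng Ne i j)ᴴ * jump Ng Ne i j * ρ +
          ρ * ((jump Ng Ne i j)ᴴ * jump Ng Ne i j)) = 0 := by
    intro i j
    rw [h1, mul_assoc, h1, ← mul_assoc, h2]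
    simp
  simp only [Lindblad, key, smul_zero, Finset.sum_const_zero, add_zero]

end Aux

theorem unique_dark_state_of_fully_degenerate_ground
    (Ng Ne : ℕ) (hNg : 1 ≤ Ng) (hNe : 1 ≤ Ne)
    (H : Matrix (Fin Ng ⊕ Fin Ne) (Fin Ng ⊕ Fin Ne) ℂ) (hH : H.IsHermitian)
    (γ : Fin Ng → Fin Ne → ℝ) (hγ : ∀ i j, 0 ≤ γ i j)
    (hγpos : ∀ j, 0 < ∑ i, γ i j)
    (𝓔 : ℝ) (hdeg : Pg Ng Ne * H * Pg Ng Ne = (𝓔 : ℂ) • Pg Ng Ne)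
    (ψ₀ : Fin Ng ⊕ Fin Ne → ℂ) (hunit : star ψ₀ ⬝ᵥ ψ₀ = 1)
    (hψ₀P : Pg Ng Ne *ᵥ ψ₀ = ψ₀) (hψ₀Q : (Qe Ng Ne * H) *ᵥ ψ₀ = 0)
    (hker : ∀ ψ : Fin Ng ⊕ Fin Ne → ℂ, Pg Ng Ne *ᵥ ψ = ψ →
      (Qe Ng Ne * H) *ᵥ ψ = 0 → ∃ c : ℂ, ψ = c • ψ₀) :
    IsDarkState Ng Ne H γ (vecMulVec ψ₀ (star ψ₀)) ∧
    ∀ ρ : Matrix (Fin Ng ⊕ Fin Ne) (Fin Ng ⊕ Fin Ne) ℂ,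
      IsDarkState Ng Ne H γ ρ → ρ = vecMulVec ψ₀ (star ψ₀) := by
  set ρ₀ := vecMulVec ψ₀ (star ψ₀) with hρ₀def
  have hstarP : star ψ₀ ᵥ* Pg Ng Ne = star ψ₀ := by
    conv_lhs => rw [← Pg_conjTranspose Ng Ne]
    rw [← star_mulVec, hψ₀P]
  have hsupp₀ : ρ₀ = Pg Ng Ne * ρ₀ * Pg Ng Ne := by
    rw [hρ₀def, mul_vecMulVec, vecMulVec_mul, hψ₀P, hstarP]
  have hPQ : Pg Ng Ne * H + Qe Ng Ne * H = H := by
    rw [Qe, sub_mul, one_mul]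
    abel
  have hHψ : H *ᵥ ψ₀ = (𝓔 : ℂ) • ψ₀ := by
    have h1 : (Pg Ng Ne * H) *ᵥ ψ₀ = (𝓔 : ℂ) • ψ₀ := by
      calc (Pg Ng Ne * H) *ᵥ ψ₀ = (Pg Ng Ne * H) *ᵥ (Pg Ng Ne *ᵥ ψ₀) := by rw [hψ₀P]
        _ = (Pg Ng Ne * H * Pg Ng Ne) *ᵥ ψ₀ := by rw [mulVec_mulVec]
        _ = ((𝓔 : ℂ) • Pg Ng Ne) *ᵥ ψ₀ := by rw [hdeg]
        _ = (𝓔 : ℂ) • ψ₀ := by rw [smul_mulVec, hψ₀P]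
    rw [← hPQ, add_mulVec, h1, hψ₀Q, add_zero]
  have hHρ₀ : H * ρ₀ = (𝓔 : ℂ) • ρ₀ := by
    rw [hρ₀def, _root_.mul_vecMulVec, hHψ, vecMulVec_smul_left]
  have hρ₀H : ρ₀ * H = (𝓔 : ℂ) • ρ₀ := by
    have hsH : star ψ₀ ᵥ* H = (𝓔 : ℂ) • star ψ₀ := by
      conv_lhs => rw [← hH]
      rw [← star_mulVec, hHψ, star_smul]
      congr 1
      simp
    rw [hρ₀def, _root_.vecMulVec_mul, hsH, vecMulVec_smul_right]
  have hdark₀ : IsDarkState Ng Ne H γ ρ₀ := by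
    refine ⟨?_, ?_, ?_, hsupp₀⟩
    · have hrw : ρ₀ = (replicateRow Unit (star ψ₀))ᴴ * replicateRow Unit (star ψ₀) := by
        rw [hρ₀def, vecMulVec_eq Unit]
        congr 1
        ext a u
        simp [Matrix.replicateCol_apply, Matrix.replicateRow_apply, conjTranspose_apply]
      rw [hrw]
      exact posSemidef_conjTranspose_mul_self _
    · rw [hρ₀def, ← hunit]
      simp [Matrix.trace, Matrix.diag, vecMulVec_apply, dotProduct, mul_comm]
    · rw [lindblad_of_supported Ng Ne H γ ρ₀ hsupp₀, hHρ₀, hρ₀H]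
      simp
  refine ⟨hdark₀, ?_⟩
  rintro ρ ⟨hpsd, htr, hLind, hsupp⟩
  have hPρ : Pg Ng Ne * ρ = ρ := by
    conv_lhs => rw [hsupp]
    simp only [← mul_assoc]
    rw [Pg_mul_Pg, ← hsupp]
  have hcomm : H * ρ = ρ * H := by
    have h0 : (-Complex.I) • (H * ρ - ρ * H) = 0 := by
      rw [← lindblad_of_supported Ng Ne H γ ρ hsupp, hLind]
    rcases smul_eq_zero.mp h0 with h | h
    · exact absurd h (by simp [Complex.I_ne_zero])
    · exact sub_eq_zero.mp h
  have hQHρ : (Qe Ng Ne * H) * ρ = 0 := by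
    rw [mul_assoc, hcomm, hsupp]
    simp only [← mul_assoc]
    rw [show Qe Ng Ne * Pg Ng Ne = 0 by
      rw [Qe, sub_mul, one_mul, Pg_mul_Pg]; exact sub_self _]
    simp
  have hcol : ∀ b, ∃ c : ℂ, (fun a => ρ a b) = c • ψ₀ := by
    intro b
    apply hker
    · funext a
      have h := congrFun (congrFun hPρ a) b
      simpa [Matrix.mulVec, dotProduct, Matrix.mul_apply] using h
    · funext a
      have h := congrFun (congrFun hQHρ a) b
      simpa [Matrix.mulVec, dotProduct, Matrix.mul_apply] using h
  choose c hc using hcol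
  have hentry : ∀ a b, ρ a b = c b * ψ₀ a := by
    intro a b
    have := congrFun (hc b) a
    simpa using this
  obtain ⟨a₀, ha₀⟩ : ∃ a₀, ψ₀ a₀ ≠ 0 := by
    by_contra h
    push_neg at h
    simp [dotProduct, h] at hunit
  have hherm : ∀ a b, (starRingEnd ℂ) (ρ b a) = ρ a b := by
    intro a b
    have := congrFun (congrFun hpsd.1 a) b
    simpa [Matrix.conjTranspose_apply] using this
  set lam : ℂ := (starRingEnd ℂ) (c a₀) / ψ₀ a₀ with hlamdef
  have hcb : ∀ b, c b = lam * (starRingEnd ℂ) (ψ₀ b) := by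
    intro b
    have h1 : c b * ψ₀ a₀ = (starRingEnd ℂ) (c a₀) * (starRingEnd ℂ) (ψ₀ b) := by
      have := hherm a₀ b
      rw [hentry a₀ b, hentry b a₀] at this
      rw [← this]
      simp
    rw [hlamdef, div_mul_eq_mul_div, eq_div_iff ha₀]
    linear_combination h1
  have htr' : ρ.trace = lam * (star ψ₀ ⬝ᵥ ψ₀) := by
    simp only [Matrix.trace, Matrix.diag, dotProduct, Finset.mul_sum]
    apply Finset.sum_congr rfl
    intro a _
    rw [hentry a a, hcb a]
    simp only [Pi.star_apply, RCLike.star_def]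
    ring
  have hlam1 : lam = 1 := by
    rw [htr, hunit, mul_one] at htr'
    exact htr'.symm
  ext a b
  rw [hentry a b, hcb b, hlam1, one_mul, hρ₀def, vecMulVec_apply]
  simp only [Pi.star_apply, RCLike.star_def]
  ring
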